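/- There exists a Lebesgue measurable function f : ℝ → ℝ that is everywhere surjective, i.e., f(I) = ℝ for every nondegenerate interval I ⊆ ℝ, and moreover f = 0 almost everywhere. -/

import Mathlib

open MeasureTheory

noncomputable section ES

namespace ES

open Filter
open scoped ENNReal

/-! Basic definitions -/

def dni (y : ℝ) : ℝ := |y - round y|

def w (n : ℕ) (x : ℝ) : ℝ := -Real.log (dni (2 ^ n * x)) / (n * Real.log 2)

def L (x : ℝ) : ℝ≥0∞ := Filter.atTop.limsup fun n => ENNReal.ofReal (w n x)

def phi (u : ℝ≥0∞) : ℝ := if 3 < u.toReal then Real.log (u.toReal - 3) else 0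

def f0 : ℝ → ℝ := fun x => phi (L x)

/-! Measurability -/

lemma measurable_dni : Measurable dni := by
  have h1 : Measurable fun y : ℝ => ((⌊y + 1/2⌋ : ℤ) : ℝ) :=
    (measurable_from_top (f := (Int.cast : ℤ → ℝ))).comp (measurable_id.add_const _).floor
  have : dni = fun y : ℝ => |y - ((⌊y + 1/2⌋ : ℤ) : ℝ)| := by
    funext y; simp [dni, round_eq]
  rw [this]
  exact (measurable_id.sub h1).abs

lemma measurable_f0 : Measurable f0 := by
  have hw : ∀ n, Measurable (w n) := fun n =>
    (((measurable_dni.comp (measurable_const_mul _)).log).neg).div_const _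
  have hL : Measurable L :=
    Measurable.limsup fun n => ENNReal.measurable_ofReal.comp (hw n)
  have hphi : Measurable phi := by
    refine Measurable.ite (measurableSet_lt measurable_const ENNReal.measurable_toReal) ?_
      measurable_const
    exact ((ENNReal.measurable_toReal.sub_const _)).log
  exact hphi.comp hL

/-! Almost-everywhere bound on `L` -/

def Ecov (n : ℕ) : Set ℝ :=
  ⋃ p ∈ Finset.range (2 ^ n + 1), Metric.ball ((p : ℝ) / 2 ^ n) ((8⁻¹ : ℝ) ^ n)

lemma w_le_two {n : ℕ} {x : ℝ} (hn : 1 ≤ n) (h : (4⁻¹ : ℝ) ^ n ≤ dni (2 ^ n * x)) :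
    w n x ≤ 2 := by
  have hpos : (0:ℝ) < (4⁻¹ : ℝ) ^ n := by positivity
  have hlog : Real.log ((4⁻¹:ℝ) ^ n) ≤ Real.log (dni (2 ^ n * x)) :=
    Real.log_le_log hpos h
  have h4 : Real.log ((4⁻¹:ℝ) ^ n) = -(n * (2 * Real.log 2)) := by
    rw [Real.log_pow, Real.log_inv]
    have : Real.log 4 = 2 * Real.log 2 := by
      rw [show (4:ℝ) = 2^2 by norm_num, Real.log_pow]; push_cast; ring
    rw [this]; ring
  have hl2 : (0:ℝ) < Real.log 2 := Real.log_pos (by norm_num)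
  have hden : (0:ℝ) < n * Real.log 2 := by
    have : (1:ℝ) ≤ n := by exact_mod_cast hn
    nlinarith
  rw [w, div_le_iff₀ hden]
  nlinarith [hlog, h4]

lemma cover {n : ℕ} {x : ℝ} (hx : x ∈ Set.Ico (0:ℝ) 1)
    (h : dni (2 ^ n * x) < (4⁻¹ : ℝ) ^ n) : x ∈ Ecov n := by
  set y := 2 ^ n * x with hy
  have h2 : (0:ℝ) < 2 ^ n := by positivity
  have hy0 : 0 ≤ y := mul_nonneg (le_of_lt h2) hx.1
  have hy1 : y < 2 ^ n := by
    have := hx.2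
    calc y < 2 ^ n * 1 := mul_lt_mul_of_pos_left this h2
    _ = 2 ^ n := mul_one _
  have habs : |y - round y| ≤ 1/2 := abs_sub_round y
  have hr0 : 0 ≤ round y := by
    by_contra hc
    push_neg at hc
    have : (round y : ℝ) ≤ -1 := by exact_mod_cast Int.le_of_lt_add_one (by simpa using hc)
    have := abs_le.1 habs
    linarith [this.2]
  have hrn : round y ≤ 2 ^ n := by
    by_contra hc
    push_neg at hc
    have : ((2:ℤ) ^ n + 1 : ℤ) ≤ round y := hc
    have h' : ((2:ℝ) ^ n + 1 : ℝ) ≤ (round y : ℝ) := by exact_mod_cast this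
    have := abs_le.1 habs
    linarith [this.1]
  refine Set.mem_biUnion (show (round y).toNat ∈ Finset.range (2^n+1) from ?_) ?_
  · refine Finset.mem_range.2 ?_
    have h' : (round y).toNat ≤ 2 ^ n := Int.toNat_le.2 (by exact_mod_cast hrn)
    omega
  · have : |x - (round y).toNat / 2 ^ n| < (8⁻¹:ℝ)^n := by
      have hcast : ((round y).toNat : ℝ) = (round y : ℝ) := by
        exact_mod_cast Int.toNat_of_nonneg hr0
      rw [hcast]
      have heq : x - (round y : ℝ) / 2 ^ n = (y - round y) / 2 ^ n := by
        field_simp [hy]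
        ring
      rw [heq, abs_div, abs_of_pos h2, div_lt_iff₀ h2]
      calc |y - round y| < (4⁻¹:ℝ)^n := h
      _ = (8⁻¹:ℝ)^n * 2^n := by rw [← mul_pow]; norm_num
    simpa [Real.dist_eq] using this

lemma vol_Ecov (n : ℕ) : volume (Ecov n) ≤ ENNReal.ofReal (4 * (2⁻¹:ℝ)^n) := by
  have key : ((2:ℝ)^n + 1) * (2 * (8⁻¹:ℝ)^n) ≤ 4 * (2⁻¹:ℝ)^n := by
    have h8 : (8⁻¹:ℝ)^n = (2⁻¹:ℝ)^n * (4⁻¹:ℝ)^n := by rw [← mul_pow]; norm_num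
    have h2 : ((2:ℝ)^n + 1) * (4⁻¹:ℝ)^n ≤ 2 := by
      have ha : (2:ℝ)^n + 1 ≤ 2 * 4^n := by
        have h1 : (2:ℝ)^n ≤ 4^n := pow_le_pow_left₀ (by norm_num) (by norm_num) n
        have h0 : (1:ℝ) ≤ 4^n := one_le_pow₀ (by norm_num)
        linarith
      have hb : (4⁻¹:ℝ)^n * 4^n = 1 := by rw [← mul_pow]; norm_num
      have hc : (0:ℝ) < (4⁻¹:ℝ)^n := by positivity
      nlinarith
    calc ((2:ℝ)^n + 1) * (2 * (8⁻¹:ℝ)^n) = (((2:ℝ)^n + 1) * (4⁻¹:ℝ)^n) * (2 * (2⁻¹:ℝ)^n) := by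
          rw [h8]; ring
    _ ≤ 2 * (2 * (2⁻¹:ℝ)^n) := mul_le_mul_of_nonneg_right h2 (by positivity)
    _ = 4 * (2⁻¹:ℝ)^n := by ring
  calc volume (Ecov n)
      ≤ ∑ p ∈ Finset.range (2 ^ n + 1), volume (Metric.ball ((p : ℝ) / 2 ^ n) ((8⁻¹ : ℝ) ^ n)) :=
        measure_biUnion_finset_le _ _
  _ = ∑ p ∈ Finset.range (2 ^ n + 1), ENNReal.ofReal (2 * (8⁻¹:ℝ)^n) := by
        refine Finset.sum_congr rfl fun p _ => ?_
        rw [Real.volume_ball]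
  _ = ((2 ^ n + 1 : ℕ) : ℝ≥0∞) * ENNReal.ofReal (2 * (8⁻¹:ℝ)^n) := by
        rw [Finset.sum_const, Finset.card_range, nsmul_eq_mul]
  _ = ENNReal.ofReal (((2:ℝ)^n + 1) * (2 * (8⁻¹:ℝ)^n)) := by
        have : ((2 ^ n + 1 : ℕ) : ℝ≥0∞) = ENNReal.ofReal ((2:ℝ)^n + 1) := by
          rw [← ENNReal.ofReal_natCast]
          congr 1
          push_cast; ring
        rw [this, ← ENNReal.ofReal_mul (by positivity)]
  _ ≤ ENNReal.ofReal (4 * (2⁻¹:ℝ)^n) := ENNReal.ofReal_le_ofReal key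

lemma dni_add_int (y : ℝ) (m : ℤ) : dni (y + m) = dni y := by
  rw [dni, dni, round_add_intCast]; push_cast; ring_nf

lemma w_add_int (n : ℕ) (x : ℝ) (m : ℤ) : w n (x + m) = w n x := by
  rw [w, w]
  have : 2 ^ n * (x + m) = 2 ^ n * x + ((2^n * m : ℤ) : ℝ) := by push_cast; ring
  rw [this, dni_add_int]

lemma L_add_int (x : ℝ) (m : ℤ) : L (x + m) = L x := by
  simp only [L, w_add_int]

lemma ae_L_le : ∀ᵐ x : ℝ, L x ≤ ENNReal.ofReal 2 := by
  set Zs := {x : ℝ | ¬ L x ≤ ENNReal.ofReal 2} with hZs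
  have hA : volume (Zs ∩ Set.Ico (0:ℝ) 1) = 0 := by
    have hsub : Zs ∩ Set.Ico (0:ℝ) 1 ⊆ atTop.limsup Ecov := by
      intro x hx
      by_contra hmem
      rw [mem_limsup_iff_frequently_mem, not_frequently] at hmem
      have hev : ∀ᶠ n : ℕ in atTop, ENNReal.ofReal (w n x) ≤ ENNReal.ofReal 2 := by
        filter_upwards [hmem, eventually_ge_atTop 1] with n hn1 hn2
        refine ENNReal.ofReal_le_ofReal (w_le_two hn2 ?_)
        by_contra hlt
        exact hn1 (cover hx.2 (lt_of_not_ge hlt))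
      exact hx.1 (limsup_le_of_le (by isBoundedDefault) hev)
    refine measure_mono_null hsub ?_
    refine measure_limsup_atTop_eq_zero ?_
    refine ne_top_of_le_ne_top ?_ (ENNReal.tsum_le_tsum fun n => vol_Ecov n)
    have hs : Summable (fun n : ℕ => 4 * (2⁻¹:ℝ)^n) :=
      (summable_geometric_of_lt_one (by norm_num) (by norm_num)).mul_left 4
    rw [← ENNReal.ofReal_tsum_of_nonneg (fun n => by positivity) hs]
    exact ENNReal.ofReal_ne_top
  have hB : ∀ m : ℤ, volume (Zs ∩ Set.Ico (m:ℝ) (m+1)) = 0 := by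
    intro m
    have hsub : Zs ∩ Set.Ico (m:ℝ) (m+1)
        ⊆ (fun x : ℝ => x + ((-m : ℤ) : ℝ)) ⁻¹' (Zs ∩ Set.Ico (0:ℝ) 1) := by
      intro x hx
      have h1 := hx.2.1
      have h2 := hx.2.2
      constructor
      · have heq : L (x + ((-m : ℤ) : ℝ)) = L x := L_add_int x (-m)
        have hx1 := hx.1
        simp only [hZs, Set.mem_setOf_eq, Set.mem_preimage] at hx1 ⊢
        rw [heq]
        exact hx1
      · constructor
        · simp only [Set.mem_preimage]; push_cast; linarith
        · simp only [Set.mem_preimage]; push_cast; linarith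
    refine measure_mono_null hsub ?_
    rw [measure_preimage_add_right]
    exact hA
  have hC : Zs ⊆ ⋃ m : ℤ, Zs ∩ Set.Ico (m:ℝ) (m+1) := fun x hx =>
    Set.mem_iUnion.2 ⟨⌊x⌋, hx, Int.floor_le x, Int.lt_floor_add_one x⟩
  have : volume Zs = 0 :=
    measure_mono_null hC (measure_iUnion_null fun m => hB m)
  rw [MeasureTheory.ae_iff]
  exact this

lemma ae_f0 : f0 =ᵐ[volume] 0 := by
  filter_upwards [ae_L_le] with x hx
  have h2 : (L x).toReal ≤ 2 := ENNReal.toReal_le_of_le_ofReal (by norm_num) hx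
  simp only [f0, phi, Pi.zero_apply]
  rw [if_neg (by linarith)]

/-! The sequence `mu` -/

def mu (t : ℝ) (K : ℕ) : ℕ → ℕ
  | 0 => K + 1
  | (k+1) => ⌈t * mu t K k⌉₊

variable {t : ℝ} {K : ℕ}

lemma mu_zero (t : ℝ) (K : ℕ) : mu t K 0 = K + 1 := rfl

lemma mu_pos (ht : 4 ≤ t) : ∀ k, 1 ≤ mu t K k
  | 0 => Nat.succ_le_succ (Nat.zero_le K)
  | (k+1) => by
      have h1 : (1:ℝ) ≤ mu t K k := by exact_mod_cast mu_pos ht k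
      have : (1:ℝ) ≤ t * mu t K k := by nlinarith
      have := Nat.le_ceil (t * mu t K k)
      have h2 : (1:ℝ) ≤ (⌈t * mu t K k⌉₊ : ℝ) := by linarith
      exact_mod_cast h2

lemma mu_succ_ge (ht : 4 ≤ t) (k : ℕ) : 4 * mu t K k ≤ mu t K (k+1) := by
  have h1 : (0:ℝ) ≤ (mu t K k : ℝ) := Nat.cast_nonneg _
  have h2 : (4 * mu t K k : ℝ) ≤ t * mu t K k := by nlinarith
  have h3 := Nat.le_ceil (t * mu t K k)
  have : ((4 * mu t K k : ℕ) : ℝ) ≤ (⌈t * mu t K k⌉₊ : ℝ) := by push_cast; linarith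
  exact_mod_cast this

lemma mu_succ_le (ht : 4 ≤ t) (k : ℕ) : (mu t K (k+1) : ℝ) ≤ t * mu t K k + 1 := by
  have h1 : (0:ℝ) ≤ (mu t K k : ℝ) := Nat.cast_nonneg _
  have h0 : (0:ℝ) ≤ t * mu t K k := by nlinarith
  have := Nat.ceil_lt_add_one h0
  exact le_of_lt (by exact_mod_cast this)

lemma mu_ge_tmul (ht : 4 ≤ t) (k : ℕ) : t * mu t K k ≤ (mu t K (k+1) : ℝ) :=
  Nat.le_ceil _

lemma mu_succ_gap (ht : 4 ≤ t) (k : ℕ) : mu t K k + 3 ≤ mu t K (k+1) := by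
  have := mu_succ_ge ht (K := K) k
  have := mu_pos ht (K := K) k
  omega

lemma mu_strictMono (ht : 4 ≤ t) : StrictMono (mu t K) :=
  strictMono_nat_of_lt_succ fun k => by have := mu_succ_gap ht (K := K) k; omega

lemma mu_mono (ht : 4 ≤ t) {j k : ℕ} (h : j ≤ k) : mu t K j ≤ mu t K k :=
  (mu_strictMono (K := K) ht).monotone h

lemma mu_add_le (ht : 4 ≤ t) (k j : ℕ) : mu t K k + j ≤ mu t K (k + j) := by
  induction j with
  | zero => simp
  | succ j ih =>
      have h := mu_succ_gap ht (K := K) (k + j)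
      have : k + (j + 1) = (k + j) + 1 := by ring
      rw [this]
      omega

lemma mu_ge (ht : 4 ≤ t) (k : ℕ) : K + 1 + k ≤ mu t K k := by
  simpa [mu_zero] using mu_add_le ht (K := K) 0 k

/-! The tail sums `Rr` and the point `xx` -/

def Rr (t : ℝ) (K : ℕ) (k : ℕ) : ℝ := ∑' j : ℕ, (2⁻¹ : ℝ) ^ (mu t K (k + j))

def xx (t : ℝ) (K : ℕ) (m : ℤ) : ℝ := (m:ℝ)/2^K + Rr t K 0

lemma geo_summable (c : ℝ) : Summable (fun j : ℕ => c * (2⁻¹:ℝ)^j) :=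
  (summable_geometric_of_lt_one (by norm_num) (by norm_num)).mul_left c

lemma Rr_term_le (ht : 4 ≤ t) (k j : ℕ) :
    (2⁻¹ : ℝ) ^ (mu t K (k + j)) ≤ (2⁻¹:ℝ)^(mu t K k) * (2⁻¹:ℝ)^j := by
  calc (2⁻¹ : ℝ) ^ (mu t K (k + j)) ≤ (2⁻¹:ℝ) ^ (mu t K k + j) :=
        pow_le_pow_of_le_one (by norm_num) (by norm_num) (mu_add_le ht k j)
  _ = (2⁻¹:ℝ)^(mu t K k) * (2⁻¹:ℝ)^j := pow_add _ _ _

lemma Rr_summable (ht : 4 ≤ t) (k : ℕ) :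
    Summable (fun j : ℕ => (2⁻¹ : ℝ) ^ (mu t K (k + j))) :=
  Summable.of_nonneg_of_le (fun j => by positivity) (fun j => Rr_term_le ht k j)
    (geo_summable _)

lemma Rr_le (ht : 4 ≤ t) (k : ℕ) : Rr t K k ≤ 2 * (2⁻¹:ℝ)^(mu t K k) := by
  have h := Summable.tsum_le_tsum (fun j => Rr_term_le (K := K) ht k j) (Rr_summable ht k) (geo_summable _)
  rw [Rr]
  calc (∑' j : ℕ, (2⁻¹ : ℝ) ^ (mu t K (k + j))) ≤ ∑' j : ℕ, (2⁻¹:ℝ)^(mu t K k) * (2⁻¹:ℝ)^j := h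
  _ = (2⁻¹:ℝ)^(mu t K k) * (1 - 2⁻¹)⁻¹ := by
      rw [tsum_mul_left, tsum_geometric_of_lt_one (by norm_num) (by norm_num)]
  _ = 2 * (2⁻¹:ℝ)^(mu t K k) := by norm_num; ring

lemma Rr_ge (ht : 4 ≤ t) (k : ℕ) : (2⁻¹:ℝ)^(mu t K k) ≤ Rr t K k := by
  have h := Summable.le_tsum (Rr_summable (K := K) ht k) 0 (fun j _ => by positivity)
  rw [Rr]
  simpa using h

lemma Rr_pos (ht : 4 ≤ t) (k : ℕ) : 0 < Rr t K k :=
  lt_of_lt_of_le (by positivity) (Rr_ge ht k)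

lemma Rr_split (ht : 4 ≤ t) (k : ℕ) :
    Rr t K k = (2⁻¹:ℝ)^(mu t K k) + Rr t K (k+1) := by
  rw [Rr, Summable.tsum_eq_zero_add (Rr_summable ht k)]
  have h1 : (2⁻¹:ℝ) ^ mu t K (k + 0) = (2⁻¹:ℝ) ^ mu t K k := by norm_num
  have h2 : (∑' j : ℕ, (2⁻¹:ℝ) ^ mu t K (k + (j + 1))) = Rr t K (k + 1) := by
    rw [Rr]
    apply tsum_congr
    intro j
    congr 2
    ring
  rw [h1, h2]

/-! Arithmetic helpers -/

lemma two_pow_mul_inv_pow {μ n : ℕ} (h : μ ≤ n) :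
    (2:ℝ)^n * (2⁻¹:ℝ)^μ = ((2^(n-μ) : ℤ) : ℝ) := by
  have h2 : (2:ℝ)^n = 2^(n-μ) * 2^μ := by rw [← pow_add, Nat.sub_add_cancel h]
  rw [inv_pow, h2]
  push_cast
  field_simp

lemma two_pow_mul_div {K n : ℕ} (h : K ≤ n) (m : ℤ) :
    (2:ℝ)^n * ((m:ℝ) / 2^K) = ((m * 2^(n-K) : ℤ) : ℝ) := by
  have h2 : (2:ℝ)^n = 2^(n-K) * 2^K := by rw [← pow_add, Nat.sub_add_cancel h]
  rw [h2]
  push_cast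
  field_simp

lemma dni_int_add_of_le_half {A : ℤ} {r : ℝ} (h0 : 0 ≤ r) (h1 : r ≤ 1/2) :
    dni ((A:ℝ) + r) = r := by
  have hround : round ((A:ℝ) + r) = A + ⌊r + 1/2⌋ := by
    rw [round_eq, add_assoc, Int.floor_intCast_add]
  rw [dni, hround]
  by_cases hr : r < 1/2
  · have : ⌊r + 1/2⌋ = 0 := by
      rw [Int.floor_eq_zero_iff]
      constructor
      · linarith
      · norm_num; linarith
    rw [this]
    push_cast
    rw [show (A:ℝ) + r - (A + 0) = r by ring]
    exact abs_of_nonneg h0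
  · have hr' : r = 1/2 := le_antisymm h1 (not_lt.1 hr)
    subst hr'
    have : ⌊(1:ℝ)/2 + 1/2⌋ = 1 := by norm_num
    rw [this]
    push_cast
    rw [show (A:ℝ) + 1/2 - (A + 1) = -(1/2) by ring]
    rw [abs_neg, abs_of_nonneg (by norm_num)]

lemma dni_int_add_between {A : ℤ} {r : ℝ} (h0 : 1/2 ≤ r) (h1 : r ≤ 3/4) :
    dni ((A:ℝ) + r) = 1 - r := by
  have hround : round ((A:ℝ) + r) = A + ⌊r + 1/2⌋ := by
    rw [round_eq, add_assoc, Int.floor_intCast_add]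
  have hfl : ⌊r + 1/2⌋ = 1 := by
    rw [Int.floor_eq_iff]
    constructor
    · push_cast; linarith
    · push_cast; linarith
  rw [dni, hround, hfl]
  push_cast
  rw [show (A:ℝ) + r - (A + 1) = -(1 - r) by ring]
  rw [abs_neg, abs_of_nonneg (by linarith)]

/-! Evaluation of `dni` at the constructed points -/

lemma exists_int (ht : 4 ≤ t) (m : ℤ) :
    ∀ k n, mu t K k ≤ n → ∃ A : ℤ, (2:ℝ)^n * xx t K m = (A:ℝ) + 2^n * Rr t K (k+1) := by
  intro k
  induction k with
  | zero =>
      intro n hn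
      have hK : K ≤ n := by have := mu_zero t K; omega
      have hμn : mu t K 0 ≤ n := hn
      refine ⟨m * 2^(n-K) + 2^(n - mu t K 0), ?_⟩
      rw [xx, Rr_split ht 0]
      push_cast
      rw [mul_add, mul_add, two_pow_mul_div hK m, two_pow_mul_inv_pow hμn]
      push_cast
      ring
  | succ k ih =>
      intro n hn
      have hk : mu t K k ≤ n := le_trans (mu_mono ht (Nat.le_succ k)) hn
      obtain ⟨A, hA⟩ := ih n hk
      refine ⟨A + 2^(n - mu t K (k+1)), ?_⟩
      rw [xx] at hA ⊢
      rw [hA, Rr_split ht (k+1), mul_add, two_pow_mul_inv_pow hn]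
      push_cast
      ring

lemma r_pos (ht : 4 ≤ t) (k n : ℕ) : 0 < (2:ℝ)^n * Rr t K (k+1) := by
  have := Rr_pos (K := K) ht (k+1); positivity

lemma r_ge (ht : 4 ≤ t) (k n : ℕ) :
    (2:ℝ)^n / 2^(mu t K (k+1)) ≤ 2^n * Rr t K (k+1) := by
  have h := Rr_ge (K := K) ht (k+1)
  have h2 : (0:ℝ) < 2^n := by positivity
  calc (2:ℝ)^n / 2^(mu t K (k+1)) = 2^n * (2⁻¹:ℝ)^(mu t K (k+1)) := by
        rw [inv_pow]; ring
  _ ≤ 2^n * Rr t K (k+1) := by nlinarith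

lemma r_le (ht : 4 ≤ t) (k n : ℕ) :
    (2:ℝ)^n * Rr t K (k+1) ≤ 2 * 2^n / 2^(mu t K (k+1)) := by
  have h := Rr_le (K := K) ht (k+1)
  have h2 : (0:ℝ) < 2^n := by positivity
  calc (2:ℝ)^n * Rr t K (k+1) ≤ 2^n * (2 * (2⁻¹:ℝ)^(mu t K (k+1))) := by nlinarith
  _ = 2 * 2^n / 2^(mu t K (k+1)) := by rw [inv_pow]; ring

lemma r_le_half (ht : 4 ≤ t) {k n : ℕ} (h2 : n + 2 ≤ mu t K (k+1)) :
    (2:ℝ)^n * Rr t K (k+1) ≤ 1/2 := by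
  refine le_trans (r_le ht k n) ?_
  have hp : (2:ℝ)^(n+2) ≤ 2^(mu t K (k+1)) :=
    pow_le_pow_right₀ (by norm_num) h2
  have h2n : (0:ℝ) < 2^(mu t K (k+1)) := by positivity
  rw [div_le_iff₀ h2n]
  rw [pow_add] at hp
  nlinarith [pow_pos (show (0:ℝ) < 2 by norm_num) n]

lemma dni_eval (ht : 4 ≤ t) (m : ℤ) {k n : ℕ} (h1 : mu t K k ≤ n)
    (h2 : n + 2 ≤ mu t K (k+1)) :
    dni ((2:ℝ)^n * xx t K m) = 2^n * Rr t K (k+1) := by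
  obtain ⟨A, hA⟩ := exists_int ht m k n h1
  rw [hA]
  exact dni_int_add_of_le_half (le_of_lt (r_pos ht k n)) (r_le_half ht h2)

lemma dni_eval_edge (ht : 4 ≤ t) (m : ℤ) {k n : ℕ} (hn : n + 1 = mu t K (k+1))
    (h1 : mu t K k ≤ n) :
    1/4 ≤ dni ((2:ℝ)^n * xx t K m) := by
  obtain ⟨A, hA⟩ := exists_int ht m k n h1
  have hsplit : Rr t K (k+1) = (2⁻¹:ℝ)^(mu t K (k+1)) + Rr t K (k+2) := Rr_split ht (k+1)
  have hhalf : (2:ℝ)^n * (2⁻¹:ℝ)^(mu t K (k+1)) = 1/2 := by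
    rw [inv_pow, ← hn, pow_add]
    field_simp
  set r' := (2:ℝ)^n * Rr t K (k+2) with hr'
  have hr'pos : 0 < r' := r_pos ht (k+1) n
  have hr'le : r' ≤ 1/4 := by
    have h00 := r_le (K := K) ht (k+1) n
    have hgap : n + 4 ≤ mu t K (k+2) := by
      have hg2 := mu_succ_gap (K := K) ht (k+1)
      have he : k + 1 + 1 = k + 2 := rfl
      rw [he] at hg2
      omega
    have hp : (2:ℝ)^(n+4) ≤ 2^(mu t K (k+2)) :=
      pow_le_pow_right₀ (by norm_num) hgap
    have h2n : (0:ℝ) < 2^(mu t K (k+2)) := by positivity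
    have h2n' : (0:ℝ) < (2:ℝ)^n := by positivity
    have hle2 : (2:ℝ)^n * Rr t K (k+2) ≤ 2 * 2^n / 2^(mu t K (k+2)) := r_le ht (k+1) n
    rw [hr']
    refine le_trans hle2 ?_
    rw [div_le_iff₀ h2n]
    rw [show n+4 = n+1+3 by ring] at hp
    rw [pow_add, pow_add] at hp
    nlinarith
  have heval : dni ((2:ℝ)^n * xx t K m) = 1 - (1/2 + r') := by
    rw [hA, hsplit, mul_add, hhalf]
    exact dni_int_add_between (by linarith) (by linarith)
  rw [heval]
  linarith

/-! Bounds on `w` at the constructed points -/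

lemma log2_pos : (0:ℝ) < Real.log 2 := Real.log_pos (by norm_num)

lemma w_upper (ht : 4 ≤ t) (m : ℤ) {k n : ℕ} (h1 : mu t K k ≤ n)
    (h2 : n + 2 ≤ mu t K (k+1)) :
    w n (xx t K m) ≤ ((mu t K (k+1) : ℝ) - n) / n := by
  have hn1 : 1 ≤ n := le_trans (mu_pos ht k) h1
  have hnR : (1:ℝ) ≤ n := by exact_mod_cast hn1
  have hden : (0:ℝ) < n * Real.log 2 := by nlinarith [log2_pos]
  have hr := dni_eval (K := K) ht m h1 h2
  have hge := r_ge (K := K) ht k n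
  have hq : (0:ℝ) < (2:ℝ)^n / 2^(mu t K (k+1)) := by positivity
  have hlog : Real.log ((2:ℝ)^n / 2^(mu t K (k+1))) ≤ Real.log (dni ((2:ℝ)^n * xx t K m)) := by
    rw [hr]; exact Real.log_le_log hq hge
  have hld : Real.log ((2:ℝ)^n / 2^(mu t K (k+1)))
      = (n:ℝ) * Real.log 2 - (mu t K (k+1) : ℝ) * Real.log 2 := by
    rw [Real.log_div (by positivity) (by positivity), Real.log_pow, Real.log_pow]
  have hnpos : (0:ℝ) < (n:ℝ) := by linarith
  rw [w, div_le_div_iff₀ hden hnpos]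
  nlinarith [hlog, hld, log2_pos]

lemma w_lower (ht : 4 ≤ t) (m : ℤ) {k n : ℕ} (h1 : n = mu t K k)
    (h2 : n + 2 ≤ mu t K (k+1)) :
    ((mu t K (k+1) : ℝ) - n - 1) / n ≤ w n (xx t K m) := by
  have hn1 : 1 ≤ n := by rw [h1]; exact mu_pos ht k
  have hnR : (1:ℝ) ≤ n := by exact_mod_cast hn1
  have hden : (0:ℝ) < n * Real.log 2 := by nlinarith [log2_pos]
  have hr := dni_eval (K := K) ht m (le_of_eq h1.symm) h2
  have hle := r_le (K := K) ht k n
  have hpos := r_pos (K := K) ht k n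
  have hlog : Real.log (dni ((2:ℝ)^n * xx t K m)) ≤ Real.log (2 * 2^n / 2^(mu t K (k+1))) := by
    rw [hr]; exact Real.log_le_log hpos hle
  have hld : Real.log ((2:ℝ) * 2^n / 2^(mu t K (k+1)))
      = Real.log 2 + (n:ℝ) * Real.log 2 - (mu t K (k+1) : ℝ) * Real.log 2 := by
    rw [Real.log_div (by positivity) (by positivity), Real.log_mul (by norm_num) (by positivity),
      Real.log_pow, Real.log_pow]
  have hnpos : (0:ℝ) < (n:ℝ) := by linarith
  rw [w, div_le_div_iff₀ hnpos hden]
  nlinarith [hlog, hld, log2_pos]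

lemma w_edge (ht : 4 ≤ t) (m : ℤ) {k n : ℕ} (hn : n + 1 = mu t K (k+1))
    (h1 : mu t K k ≤ n) : w n (xx t K m) ≤ 2 / n := by
  have hn1 : 1 ≤ n := le_trans (mu_pos ht k) h1
  have hnR : (1:ℝ) ≤ n := by exact_mod_cast hn1
  have hden : (0:ℝ) < n * Real.log 2 := by nlinarith [log2_pos]
  have hd := dni_eval_edge (K := K) ht m hn h1
  have hlog : Real.log (1/4 : ℝ) ≤ Real.log (dni ((2:ℝ)^n * xx t K m)) :=
    Real.log_le_log (by norm_num) hd
  have h14 : Real.log (1/4 : ℝ) = -(2 * Real.log 2) := by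
    rw [show (1/4:ℝ) = (2:ℝ)^(-2 : ℤ) by norm_num, Real.log_zpow]
    push_cast; ring
  have hnpos : (0:ℝ) < (n:ℝ) := by linarith
  rw [w, div_le_div_iff₀ hden hnpos]
  nlinarith [hlog, h14, log2_pos]

lemma exists_k (ht : 4 ≤ t) {n : ℕ} (hn : mu t K 0 ≤ n) :
    ∃ k, mu t K k ≤ n ∧ n < mu t K (k+1) := by
  classical
  set P : ℕ → Prop := fun k => mu t K k ≤ n with hP
  have hdec : DecidablePred P := fun k => inferInstanceAs (Decidable (_ ≤ _))
  set k := Nat.findGreatest P n with hk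
  have hPk : P k := Nat.findGreatest_spec (Nat.zero_le n) hn
  refine ⟨k, hPk, ?_⟩
  by_contra hc
  push_neg at hc
  have hk1n : k + 1 ≤ n := by
    have := mu_ge (K := K) ht (k+1)
    omega
  exact Nat.findGreatest_is_greatest (Nat.lt_succ_self k) hk1n hc

lemma upper_eventually (ht : 4 ≤ t) (m : ℤ) {ε : ℝ} (hε : 0 < ε) :
    ∀ᶠ n in atTop, w n (xx t K m) ≤ (t - 1) + ε := by
  obtain ⟨k0, hk0⟩ : ∃ k0 : ℕ, 1 / (mu t K k0 : ℝ) ≤ ε := by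
    obtain ⟨k0, hk0⟩ := exists_nat_gt (1/ε)
    refine ⟨k0, ?_⟩
    have h1 : (k0 : ℝ) ≤ mu t K k0 := by
      have h := mu_ge (K := K) ht k0
      have : k0 ≤ mu t K k0 := by omega
      exact_mod_cast this
    have h2 : 1/ε < (mu t K k0 : ℝ) := lt_of_lt_of_le hk0 h1
    have hμpos : (0:ℝ) < (mu t K k0 : ℝ) := by
      have := mu_pos (K := K) ht k0
      exact_mod_cast Nat.lt_of_lt_of_le Nat.zero_lt_one this
    rw [div_le_iff₀ hμpos]
    rw [div_lt_iff₀ hε] at h2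
    nlinarith
  filter_upwards [eventually_ge_atTop (mu t K k0)] with n hn
  have hn0 : mu t K 0 ≤ n := le_trans (mu_mono ht (Nat.zero_le k0)) hn
  obtain ⟨k, hk1, hk2⟩ := exists_k ht hn0
  have hkk0 : k0 ≤ k := by
    by_contra hc
    push_neg at hc
    have : mu t K (k+1) ≤ mu t K k0 := mu_mono ht (by omega)
    omega
  have hμk0 : mu t K k0 ≤ mu t K k := mu_mono ht hkk0
  have hnR : (1:ℝ) ≤ n := by
    have := le_trans (mu_pos ht k) hk1; exact_mod_cast this
  have hμpos : (0:ℝ) < (mu t K k : ℝ) := by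
    have := mu_pos (K := K) ht k
    exact_mod_cast Nat.lt_of_lt_of_le Nat.zero_lt_one this
  by_cases hcase : n + 2 ≤ mu t K (k+1)
  · have hw := w_upper ht m hk1 hcase
    have step1 : ((mu t K (k+1) : ℝ) - n) / n ≤ ((mu t K (k+1) : ℝ) - mu t K k) / mu t K k := by
      have hnn : (0:ℝ) < (n:ℝ) := by linarith
      have hμn : (mu t K k : ℝ) ≤ n := by exact_mod_cast hk1
      have hμ1 : (0:ℝ) ≤ (mu t K (k+1) : ℝ) := Nat.cast_nonneg _
      rw [div_le_div_iff₀ hnn hμpos]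
      have h := mul_le_mul_of_nonneg_left hμn hμ1
      nlinarith
    have step2 : ((mu t K (k+1) : ℝ) - mu t K k) / mu t K k ≤ t - 1 + 1 / mu t K k := by
      have h := mu_succ_le (K := K) ht k
      rw [div_le_iff₀ hμpos]
      have expand : (t - 1 + 1 / mu t K k) * mu t K k = t * mu t K k - mu t K k + 1 := by
        field_simp
      rw [expand]
      linarith
    have step3 : (1:ℝ) / mu t K k ≤ 1 / mu t K k0 := by
      apply div_le_div_of_nonneg_left (by norm_num) _ _
      · have := mu_pos (K := K) ht k0
        exact_mod_cast Nat.lt_of_lt_of_le Nat.zero_lt_one this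
      · exact_mod_cast hμk0
    linarith
  · have hedge : n + 1 = mu t K (k+1) := by omega
    have hw := w_edge ht m hedge hk1
    have : (2:ℝ)/n ≤ 2 := by
      rw [div_le_iff₀ (by linarith)]
      nlinarith
    linarith

lemma lower_frequently (ht : 4 ≤ t) (m : ℤ) {ε : ℝ} (hε : 0 < ε) :
    ∃ᶠ n in atTop, (t - 1) - ε ≤ w n (xx t K m) := by
  obtain ⟨k0, hk0⟩ : ∃ k0 : ℕ, 1 / (mu t K k0 : ℝ) ≤ ε := by
    obtain ⟨k0, hk0⟩ := exists_nat_gt (1/ε)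
    refine ⟨k0, ?_⟩
    have h1 : (k0 : ℝ) ≤ mu t K k0 := by
      have h := mu_ge (K := K) ht k0
      have : k0 ≤ mu t K k0 := by omega
      exact_mod_cast this
    have h2 : 1/ε < (mu t K k0 : ℝ) := lt_of_lt_of_le hk0 h1
    have hμpos : (0:ℝ) < (mu t K k0 : ℝ) := by
      have := mu_pos (K := K) ht k0
      exact_mod_cast Nat.lt_of_lt_of_le Nat.zero_lt_one this
    rw [div_le_iff₀ hμpos]
    rw [div_lt_iff₀ hε] at h2
    nlinarith
  rw [frequently_atTop]
  intro N
  set k := max k0 N with hkdef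
  refine ⟨mu t K k, ?_, ?_⟩
  · have h1 : k ≤ mu t K k := by have := mu_ge (K := K) ht k; omega
    have h2 : N ≤ k := le_max_right _ _
    omega
  · have hgap := mu_succ_gap (K := K) ht k
    have hw := w_lower (K := K) ht m (k := k) (n := mu t K k) rfl (by omega)
    have hμpos : (0:ℝ) < (mu t K k : ℝ) := by
      have := mu_pos (K := K) ht k
      exact_mod_cast Nat.lt_of_lt_of_le Nat.zero_lt_one this
    have htmul := mu_ge_tmul (K := K) ht k
    have step : t - 1 - 1 / mu t K k ≤ ((mu t K (k+1) : ℝ) - mu t K k - 1) / mu t K k := by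
      rw [le_div_iff₀ hμpos]
      have expand : (t - 1 - 1 / mu t K k) * mu t K k = t * mu t K k - mu t K k - 1 := by
        field_simp
      rw [expand]
      linarith
    have step3 : (1:ℝ) / mu t K k ≤ 1 / mu t K k0 := by
      apply div_le_div_of_nonneg_left (by norm_num) _ _
      · have := mu_pos (K := K) ht k0
        exact_mod_cast Nat.lt_of_lt_of_le Nat.zero_lt_one this
      · exact_mod_cast mu_mono (K := K) ht (le_max_left k0 N)
    linarith

/-! Evaluation of `L` and `f0` at the constructed points -/

lemma L_eval (ht : 4 ≤ t) (m : ℤ) : L (xx t K m) = ENNReal.ofReal (t - 1) := by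
  have ht1 : (0:ℝ) ≤ t - 1 := by linarith
  apply le_antisymm
  · refine ENNReal.le_of_forall_pos_le_add fun ε hε hfin => ?_
    have hεR : (0:ℝ) < (ε:ℝ) := by exact_mod_cast hε
    have hev := upper_eventually (K := K) ht m hεR
    have hlim : L (xx t K m) ≤ ENNReal.ofReal ((t-1) + ε) := by
      apply limsup_le_of_le (by isBoundedDefault)
      filter_upwards [hev] with n hn
      exact ENNReal.ofReal_le_ofReal hn
    calc L (xx t K m) ≤ ENNReal.ofReal ((t-1) + ε) := hlim
    _ = ENNReal.ofReal (t-1) + ENNReal.ofReal (ε:ℝ) := ENNReal.ofReal_add ht1 (le_of_lt hεR)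
    _ = ENNReal.ofReal (t-1) + (ε : ℝ≥0∞) := by rw [ENNReal.ofReal_coe_nnreal]
  · refine ENNReal.le_of_forall_pos_le_add fun ε hε hfin => ?_
    set e := min ((ε:ℝ)) 1 with hedef
    have hεR : (0:ℝ) < (ε:ℝ) := by exact_mod_cast hε
    have he : 0 < e := lt_min hεR (by norm_num)
    have he1 : e ≤ 1 := min_le_right _ _
    have hfr := lower_frequently (K := K) ht m he
    have h1 : ENNReal.ofReal ((t-1) - e) ≤ L (xx t K m) := by
      refine le_limsup_of_frequently_le ?_ (by isBoundedDefault)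
      exact hfr.mono fun n hn => ENNReal.ofReal_le_ofReal hn
    calc ENNReal.ofReal (t-1) = ENNReal.ofReal ((t-1-e) + e) := by congr 1; ring
    _ = ENNReal.ofReal (t-1-e) + ENNReal.ofReal e := ENNReal.ofReal_add (by linarith) (le_of_lt he)
    _ ≤ L (xx t K m) + ENNReal.ofReal e := by gcongr
    _ ≤ L (xx t K m) + (ε : ℝ≥0∞) := by
        gcongr
        calc ENNReal.ofReal e ≤ ENNReal.ofReal (ε:ℝ) := ENNReal.ofReal_le_ofReal (min_le_left _ _)
        _ = (ε : ℝ≥0∞) := ENNReal.ofReal_coe_nnreal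

lemma dyadic {a b : ℝ} (hab : a < b) :
    ∃ (K : ℕ) (m : ℤ), a < (m:ℝ)/2^K ∧ ((m:ℝ)+1)/2^K < b := by
  obtain ⟨K, hK⟩ : ∃ K : ℕ, (2⁻¹:ℝ)^K < (b-a)/3 :=
    exists_pow_lt_of_lt_one (by linarith) (by norm_num)
  refine ⟨K, ⌊a*2^K⌋ + 1, ?_, ?_⟩
  · have h2K : (0:ℝ) < 2^K := by positivity
    rw [lt_div_iff₀ h2K]
    push_cast
    have := Int.lt_floor_add_one (a * 2^K)
    linarith
  · have h2K : (0:ℝ) < 2^K := by positivity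
    rw [div_lt_iff₀ h2K]
    have hfl := Int.floor_le (a * 2^K)
    have hinv : (2⁻¹:ℝ)^K * 2^K = 1 := by
      rw [← mul_pow]; norm_num
    push_cast
    nlinarith

lemma xx_mem {a b : ℝ} (ht : 4 ≤ t) {m : ℤ} (h1 : a < (m:ℝ)/2^K) (h2 : ((m:ℝ)+1)/2^K < b) :
    xx t K m ∈ Set.Ioo a b := by
  have hR0 := Rr_pos (K := K) ht 0
  have hRle := Rr_le (K := K) ht 0
  have hle : Rr t K 0 ≤ (2⁻¹:ℝ)^K := by
    rw [mu_zero] at hRle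
    calc Rr t K 0 ≤ 2 * (2⁻¹:ℝ)^(K+1) := hRle
    _ = (2⁻¹:ℝ)^K := by rw [pow_succ]; ring
  have h2K : (0:ℝ) < 2^K := by positivity
  have hxle : xx t K m ≤ ((m:ℝ)+1)/2^K := by
    rw [xx]
    have hih : (2⁻¹:ℝ)^K = 1/2^K := by
      rw [inv_pow]; ring
    rw [hih] at hle
    have hstep : (m:ℝ)/2^K + Rr t K 0 ≤ (m:ℝ)/2^K + 1/2^K := by linarith
    calc (m:ℝ)/2^K + Rr t K 0 ≤ (m:ℝ)/2^K + 1/2^K := hstep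
    _ = ((m:ℝ)+1)/2^K := by ring
  constructor
  · calc a < (m:ℝ)/2^K := h1
    _ < xx t K m := by rw [xx]; linarith
  · linarith

lemma f0_eval (y : ℝ) (K : ℕ) (m : ℤ) :
    f0 (xx (4 + Real.exp y) K m) = y := by
  have hexp : 0 < Real.exp y := Real.exp_pos y
  have ht : 4 ≤ 4 + Real.exp y := by linarith
  rw [f0, L_eval ht m, phi]
  have htr : (ENNReal.ofReal (4 + Real.exp y - 1)).toReal = 3 + Real.exp y := by
    rw [ENNReal.toReal_ofReal (by linarith)]
    ring
  rw [htr, if_pos (by linarith)]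
  rw [show (3:ℝ) + Real.exp y - 3 = Real.exp y by ring, Real.log_exp]

end ES

end ES

/-- A function `f : ℝ → ℝ` is everywhere surjective if it maps every nonempty
open interval onto all of `ℝ`. -/
def EverywhereSurjective (f : ℝ → ℝ) : Prop :=
  ∀ a b : ℝ, a < b → f '' Set.Ioo a b = Set.univ

theorem stmt_3 :
    ∃ f : ℝ → ℝ, Measurable f ∧ EverywhereSurjective f ∧ f =ᵐ[volume] 0 := by
  refine ⟨ES.f0, ES.measurable_f0, ?_, ES.ae_f0⟩
  intro a b hab
  rw [Set.eq_univ_iff_forall]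
  intro y
  obtain ⟨K, m, h1, h2⟩ := ES.dyadic hab
  exact ⟨ES.xx (4 + Real.exp y) K m,
    ES.xx_mem (by linarith [Real.exp_pos y]) h1 h2, ES.f0_eval y K m⟩
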